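/- (Corollary 1) Let L be an N×N real symmetric positive semidefinite matrix whose kernel is spanned by the all-ones vector 1⃗, and suppose L has exactly K distinct nonzero eigenvalues μ₁, …, μ_K. Then: (a) with the gain sequence ε(k) = 1/μ_{k+1} for k = 0, …, K−1 one has ∏_{k=0}^{K−1}(I − ε(k)L) = (1/N)·1⃗1⃗ᵀ, i.e., average consensus is reached at time K; and (b) K is the minimum such time: for any T < K and any real gains ε(0), …, ε(T−1), ∏_{k=0}^{T−1}(I − ε(k)L) ≠ (1/N)·1⃗1⃗ᵀ. -/

import Mathlib

open Matrix Finset Filter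

/-- The product `∏_{k=0}^{T-1} (I - ε(k) L)`, built recursively as
`P 0 = I`, `P (T+1) = (I - ε(T) L) * P T`. -/
noncomputable def consProd {N : ℕ} (L : Matrix (Fin N) (Fin N) ℝ) (ε : ℕ → ℝ) :
    ℕ → Matrix (Fin N) (Fin N) ℝ
  | 0 => 1
  | T + 1 => (1 - ε T • L) * consProd L ε T

lemma consProd_mulVec {N : ℕ} (L : Matrix (Fin N) (Fin N) ℝ) (ε : ℕ → ℝ)
    {x : Fin N → ℝ} {c : ℝ} (hx : L.mulVec x = c • x) (T : ℕ) :
    (consProd L ε T).mulVec x = (∏ k ∈ Finset.range T, (1 - ε k * c)) • x := by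
  induction T with
  | zero => simp [consProd]
  | succ T ih =>
    rw [consProd, ← Matrix.mulVec_mulVec, ih, Matrix.mulVec_smul, Matrix.sub_mulVec,
      Matrix.one_mulVec, Matrix.smul_mulVec, hx, Finset.prod_range_succ]
    module

theorem stmt_5 (N : ℕ) (hN : 2 ≤ N)
    (L : Matrix (Fin N) (Fin N) ℝ) (hsymm : L.IsSymm) (hpsd : L.PosSemidef)
    (lam : Fin N → ℝ) (v : Fin N → Fin N → ℝ)
    (hlam0 : ∀ i : Fin N, (i : ℕ) = 0 → lam i = 0)
    (hlam_pos : ∀ i : Fin N, (i : ℕ) ≠ 0 → 0 < lam i)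
    (heig : ∀ i, L.mulVec (v i) = lam i • v i)
    (horth : ∀ i j, v i ⬝ᵥ v j = if i = j then 1 else 0)
    (hv0 : ∀ i : Fin N, (i : ℕ) = 0 → v i = fun _ => (Real.sqrt N)⁻¹)
    -- `μ` enumerates the `K` distinct nonzero eigenvalues of `L`
    (K : ℕ) (μ : Fin K → ℝ) (hμinj : Function.Injective μ)
    (hμrange : {x : ℝ | ∃ i : Fin N, (i : ℕ) ≠ 0 ∧ lam i = x} = Set.range μ) :
    -- (a) consensus is reached at time `K` with gains `ε(k) = 1/μ_{k+1}`
    (∀ ε : ℕ → ℝ, (∀ k : Fin K, ε (k : ℕ) = (μ k)⁻¹) →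
      consProd L ε K = (N : ℝ)⁻¹ • vecMulVec (fun _ => 1) (fun _ => 1)) ∧
    -- (b) `K` is the minimum consensus time
    (∀ T < K, ∀ ε : ℕ → ℝ,
      consProd L ε T ≠ (N : ℝ)⁻¹ • vecMulVec (fun _ => 1) (fun _ => 1)) := by
  have hNpos : (0 : ℝ) < N := by
    have : (0 : ℕ) < N := by omega
    exact_mod_cast this
  have hsqrt_pos : (0 : ℝ) < Real.sqrt N := Real.sqrt_pos.mpr hNpos
  have hsqrt_ne : Real.sqrt N ≠ 0 := ne_of_gt hsqrt_pos
  have hsqrt_sq : Real.sqrt N * Real.sqrt N = (N : ℝ) :=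
    Real.mul_self_sqrt (le_of_lt hNpos)
  set i0 : Fin N := ⟨0, by omega⟩ with hi0
  have hvi0 : v i0 = fun _ => (Real.sqrt N)⁻¹ := hv0 i0 rfl
  -- sum of the entries of each eigenvector
  have hsum : ∀ i : Fin N, ∑ j, v i j = if (i : ℕ) = 0 then Real.sqrt N else 0 := by
    intro i
    have h1 : v i0 ⬝ᵥ v i = if i0 = i then 1 else 0 := horth i0 i
    have h2 : v i0 ⬝ᵥ v i = (Real.sqrt N)⁻¹ * ∑ j, v i j := by
      simp [hvi0, dotProduct, Finset.mul_sum]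
    have hiff : i0 = i ↔ (i : ℕ) = 0 := by
      constructor
      · rintro rfl; rfl
      · intro h; exact (Fin.ext h.symm : i0 = i)
    by_cases h : (i : ℕ) = 0
    · rw [if_pos h]
      have := h1
      rw [if_pos (hiff.mpr h)] at this
      rw [h2] at this
      rw [inv_mul_eq_iff_eq_mul₀ hsqrt_ne, mul_one] at this
      linarith [this]
    · rw [if_neg h]
      have := h1
      rw [if_neg (fun hh => h (hiff.mp hh))] at this
      rw [h2] at this
      rcases mul_eq_zero.mp this with hc | hc
      · exact absurd hc (inv_ne_zero hsqrt_ne)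
      · exact hc
  -- action of the target matrix on each eigenvector
  have hRv : ∀ i : Fin N,
      ((N : ℝ)⁻¹ • vecMulVec (fun _ => (1:ℝ)) (fun _ => (1:ℝ))) *ᵥ v i
        = if (i : ℕ) = 0 then v i else 0 := by
    intro i
    funext x
    have : (((N : ℝ)⁻¹ • vecMulVec (fun _ => (1:ℝ)) (fun _ => (1:ℝ))) *ᵥ v i) x
        = (N : ℝ)⁻¹ * ∑ j, v i j := by
      simp [Matrix.mulVec, vecMulVec, dotProduct, Finset.mul_sum]
    rw [this, hsum i]
    by_cases h : (i : ℕ) = 0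
    · rw [if_pos h, if_pos h]
      have hvix : v i x = (Real.sqrt N)⁻¹ := by rw [hv0 i h]
      rw [hvix, ← hsqrt_sq]
      field_simp
      rw [Real.sqrt_sq hsqrt_pos.le]
    · rw [if_neg h, if_neg h]
      simp
  -- eigenvectors are nonzero
  have hvne : ∀ i : Fin N, v i ≠ 0 := by
    intro i hvi
    have := horth i i
    rw [hvi] at this
    simp [dotProduct] at this
  -- extensionality via the orthogonal matrix of eigenvectors
  have hext : ∀ A B : Matrix (Fin N) (Fin N) ℝ,
      (∀ i, A *ᵥ v i = B *ᵥ v i) → A = B := by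
    intro A B h
    have hV : (Matrix.of v) * (Matrix.of v)ᵀ = 1 := by
      ext i j
      have := horth i j
      simpa [Matrix.mul_apply, Matrix.one_apply, dotProduct] using this
    have hV' : (Matrix.of v)ᵀ * (Matrix.of v) = 1 := mul_eq_one_comm.mp hV
    have key : A * (Matrix.of v)ᵀ = B * (Matrix.of v)ᵀ := by
      ext x i
      have := congrFun (h i) x
      simpa [Matrix.mul_apply, Matrix.mulVec, dotProduct, Matrix.transpose_apply,
        mul_comm] using this
    calc A = A * ((Matrix.of v)ᵀ * (Matrix.of v)) := by rw [hV', mul_one]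
      _ = (A * (Matrix.of v)ᵀ) * Matrix.of v := by rw [Matrix.mul_assoc]
      _ = (B * (Matrix.of v)ᵀ) * Matrix.of v := by rw [key]
      _ = B * ((Matrix.of v)ᵀ * (Matrix.of v)) := by rw [Matrix.mul_assoc]
      _ = B := by rw [hV', mul_one]
  constructor
  · -- part (a)
    intro ε hε
    apply hext
    intro i
    rw [consProd_mulVec L ε (heig i) K, hRv i]
    by_cases h : (i : ℕ) = 0
    · rw [if_pos h]
      have hl : lam i = 0 := hlam0 i h
      simp [hl]
    · rw [if_neg h]
      have hmem : lam i ∈ Set.range μ := by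
        rw [← hμrange]; exact ⟨i, h, rfl⟩
      obtain ⟨j, hj⟩ := hmem
      have hμj : μ j ≠ 0 := by rw [hj]; exact ne_of_gt (hlam_pos i h)
      have hzero : (1 : ℝ) - ε (j : ℕ) * lam i = 0 := by
        rw [hε j, ← hj, inv_mul_cancel₀ hμj, sub_self]
      have : ∏ k ∈ Finset.range K, (1 - ε k * lam i) = 0 :=
        Finset.prod_eq_zero (Finset.mem_range.mpr j.isLt) hzero
      rw [this, zero_smul]
  · -- part (b)
    intro T hT ε hP
    -- for each distinct eigenvalue μ j, some gain must annihilate it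
    have hkill : ∀ j : Fin K, ∃ k : ℕ, k < T ∧ ε k * μ j = 1 := by
      intro j
      have hmem : μ j ∈ {x : ℝ | ∃ i : Fin N, (i : ℕ) ≠ 0 ∧ lam i = x} := by
        rw [hμrange]; exact ⟨j, rfl⟩
      obtain ⟨i, hi0, hil⟩ := hmem
      have h1 : consProd L ε T *ᵥ v i
          = (∏ k ∈ Finset.range T, (1 - ε k * lam i)) • v i :=
        consProd_mulVec L ε (heig i) T
      have h2 : consProd L ε T *ᵥ v i = 0 := by
        rw [hP, hRv i, if_neg hi0]
      rw [h2] at h1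
      have hprod : ∏ k ∈ Finset.range T, (1 - ε k * lam i) = 0 := by
        rcases smul_eq_zero.mp h1.symm with hc | hc
        · exact hc
        · exact absurd hc (hvne i)
      obtain ⟨k, hk, hk0⟩ := Finset.prod_eq_zero_iff.mp hprod
      refine ⟨k, Finset.mem_range.mp hk, ?_⟩
      rw [← hil]
      linarith [hk0]
    choose f hf1 hf2 using hkill
    have hinj : Function.Injective (fun j : Fin K => (⟨f j, hf1 j⟩ : Fin T)) := by
      intro j j' hjj
      have hff : f j = f j' := by simpa using congrArg Fin.val hjj
      have hεne : ε (f j) ≠ 0 := by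
        intro h0
        have := hf2 j
        rw [h0, zero_mul] at this
        exact one_ne_zero this.symm
      apply hμinj
      have := hf2 j'
      rw [← hff] at this
      have h1 := hf2 j
      exact mul_left_cancel₀ hεne (h1.trans this.symm)
    have := Fintype.card_le_of_injective _ hinj
    simp at this
    omega
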